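/- arXiv:1912.09300 — 2 statements merged into one kernel-verified Lean document; each statement's English description precedes it below -/
import Mathlib

section
/- Let μ̄_n be the measure on ℂ with Lebesgue density ρ_n(z) = (1/π) e^{-n|z|²} Σ_{k=0}^{n-1} (n|z|²)^k / k!. For every fixed ε ∈ (0,1) there exists a constant C > 0 such that for all n ≥ 1: sup |μ̄_n(B_R(z_0)) − μ_∞(B_R(z_0))| ≤ C e^{-n ε²}, where the supremum runs over all open balls B_R(z_0) with B_R(z_0) ⊆ ℂ \ B_{1+ε}(0) or B_R(z_0) ⊆ B_{1-ε}(0). -/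
open MeasureTheory Metric

/-- Density of the mean empirical spectral distribution of a normalized `n × n`
Ginibre matrix: `ρ_n(z) = (1/π) e^{-n|z|²} Σ_{k=0}^{n-1} (n|z|²)^k / k!`. -/
noncomputable def rhoGin (n : ℕ) (z : ℂ) : ℝ :=
  (1 / Real.pi) * Real.exp (-(n : ℝ) * ‖z‖ ^ 2) *
    ∑ k ∈ Finset.range n, ((n : ℝ) * ‖z‖ ^ 2) ^ k / (Nat.factorial k : ℝ)

/-- The mean empirical spectral distribution `μ̄_n` of the Ginibre ensemble. -/
noncomputable def muBarGin (n : ℕ) : Measure ℂ :=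
  volume.withDensity fun z => ENNReal.ofReal (rhoGin n z)

/-- The Circular Law `μ_∞`: uniform distribution on the unit disc. -/
noncomputable def muInf : Measure ℂ :=
  volume.withDensity fun z => ENNReal.ofReal (if ‖z‖ < 1 then 1 / Real.pi else 0)

lemma exp_partial_tendsto (x : ℝ) :
    Filter.Tendsto (fun m => ∑ k ∈ Finset.range m, x ^ k / (Nat.factorial k : ℝ))
      Filter.atTop (nhds (Real.exp x)) := by
  rw [Real.exp_eq_exp_ℝ]
  exact (NormedSpace.expSeries_div_hasSum_exp x).tendsto_sum_nat

lemma sum_bound_outer {t : ℝ} (ht : 1 ≤ t) (n : ℕ) :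
    ∑ k ∈ Finset.range n, ((n : ℝ) * t) ^ k / (Nat.factorial k : ℝ) ≤ t ^ n * Real.exp n := by
  have h0 : (0:ℝ) ≤ t := by linarith
  calc ∑ k ∈ Finset.range n, ((n : ℝ) * t) ^ k / (Nat.factorial k : ℝ)
      ≤ ∑ k ∈ Finset.range n, t ^ n * ((n : ℝ) ^ k / (Nat.factorial k : ℝ)) := by
        refine Finset.sum_le_sum fun k hk => ?_
        have h1 : ((n:ℝ)*t)^k = t^k * ((n:ℝ)^k) := by ring
        rw [h1, mul_div_assoc]
        exact mul_le_mul_of_nonneg_right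
          (pow_le_pow_right₀ ht (Finset.mem_range.1 hk).le) (by positivity)
    _ = t ^ n * ∑ k ∈ Finset.range n, ((n : ℝ) ^ k / (Nat.factorial k : ℝ)) := by
        rw [Finset.mul_sum]
    _ ≤ t ^ n * Real.exp n :=
        mul_le_mul_of_nonneg_left (Real.sum_le_exp_of_nonneg (by positivity) n) (by positivity)

-- tail bound, 0 ≤ t ≤ 1
lemma exp_tail_bound {t : ℝ} (h0 : 0 ≤ t) (ht : t ≤ 1) (n : ℕ) :
    Real.exp ((n : ℝ) * t) - ∑ k ∈ Finset.range n, ((n : ℝ) * t) ^ k / (Nat.factorial k : ℝ)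
      ≤ t ^ n * Real.exp n := by
  have key : ∀ m : ℕ, ∑ k ∈ Finset.range m, ((n : ℝ) * t) ^ k / (Nat.factorial k : ℝ)
      ≤ (∑ k ∈ Finset.range n, ((n : ℝ) * t) ^ k / (Nat.factorial k : ℝ)) + t ^ n * Real.exp n := by
    intro m
    rcases le_total m n with hmn | hnm
    · refine le_add_of_le_of_nonneg ?_ (by positivity)
      exact Finset.sum_le_sum_of_subset_of_nonneg
        (Finset.range_subset_range.2 hmn) (fun k _ _ => by positivity)
    · rw [← Finset.sum_range_add_sum_Ico _ hnm]
      gcongr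
      calc ∑ k ∈ Finset.Ico n m, ((n : ℝ) * t) ^ k / (Nat.factorial k : ℝ)
          ≤ ∑ k ∈ Finset.Ico n m, t ^ n * ((n : ℝ) ^ k / (Nat.factorial k : ℝ)) := by
            refine Finset.sum_le_sum fun k hk => ?_
            have h1 : ((n:ℝ)*t)^k = t^k * ((n:ℝ)^k) := by ring
            rw [h1, mul_div_assoc]
            exact mul_le_mul_of_nonneg_right
              (pow_le_pow_of_le_one h0 ht (Finset.mem_Ico.1 hk).1) (by positivity)
        _ = t ^ n * ∑ k ∈ Finset.Ico n m, ((n : ℝ) ^ k / (Nat.factorial k : ℝ)) := by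
            rw [Finset.mul_sum]
        _ ≤ t ^ n * Real.exp n := by
            refine mul_le_mul_of_nonneg_left ?_ (by positivity)
            calc ∑ k ∈ Finset.Ico n m, ((n : ℝ) ^ k / (Nat.factorial k : ℝ))
                ≤ ∑ k ∈ Finset.range m, ((n : ℝ) ^ k / (Nat.factorial k : ℝ)) := by
                  refine Finset.sum_le_sum_of_subset_of_nonneg ?_ (fun k _ _ => by positivity)
                  rw [Finset.range_eq_Ico]
                  exact Finset.Ico_subset_Ico (Nat.zero_le n) le_rfl
              _ ≤ Real.exp n := Real.sum_le_exp_of_nonneg (by positivity) m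
  have := le_of_tendsto (exp_partial_tendsto ((n:ℝ)*t)) (Filter.Eventually.of_forall key)
  linarith

-- monotone increasing on [0,1]
lemma g_incr {t u : ℝ} (h0 : 0 ≤ t) (htu : t ≤ u) (hu : u ≤ 1) :
    t * Real.exp (1 - t) ≤ u * Real.exp (1 - u) := by
  have hE2 : (1 - (u - t)) * Real.exp (u - t) ≤ 1 := by
    have h := Real.add_one_le_exp (-(u - t))
    have hp := Real.exp_pos (u - t)
    have hm : Real.exp (-(u - t)) * Real.exp (u - t) = 1 := by
      rw [← Real.exp_add]; simp
    nlinarith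
  have key : t * Real.exp (u - t) ≤ u := by
    nlinarith [Real.exp_pos (u - t), mul_nonneg (mul_nonneg (Real.exp_pos (u - t)).le
      (sub_nonneg.2 htu)) (sub_nonneg.2 hu),
      mul_le_mul_of_nonneg_left hE2 (le_trans h0 htu)]
  have hsplit : Real.exp (1 - t) = Real.exp (1 - u) * Real.exp (u - t) := by
    rw [← Real.exp_add]; ring_nf
  rw [hsplit]
  calc t * (Real.exp (1 - u) * Real.exp (u - t))
      = (t * Real.exp (u - t)) * Real.exp (1 - u) := by ring
    _ ≤ u * Real.exp (1 - u) := mul_le_mul_of_nonneg_right key (Real.exp_pos _).le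

-- monotone decreasing on [1,∞)
lemma g_decr {u t : ℝ} (hu : 1 ≤ u) (htu : u ≤ t) :
    t * Real.exp (1 - t) ≤ u * Real.exp (1 - u) := by
  have key : t ≤ u * Real.exp (t - u) := by
    nlinarith [Real.add_one_le_exp (t - u)]
  have hsplit : Real.exp (t - u) * Real.exp (1 - t) = Real.exp (1 - u) := by
    rw [← Real.exp_add]; ring_nf
  calc t * Real.exp (1 - t) ≤ (u * Real.exp (t - u)) * Real.exp (1 - t) :=
        mul_le_mul_of_nonneg_right key (Real.exp_pos _).le
    _ = u * (Real.exp (t - u) * Real.exp (1 - t)) := by ring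
    _ = u * Real.exp (1 - u) := by rw [hsplit]

lemma g_outer {ε : ℝ} (hε : 0 < ε) :
    (1 + ε) ^ 2 * Real.exp (1 - (1 + ε) ^ 2) ≤ Real.exp (-ε ^ 2) := by
  have h1 : 1 + ε ≤ Real.exp ε := by have := Real.add_one_le_exp ε; linarith
  have h2 : (1 + ε) ^ 2 ≤ Real.exp ε ^ 2 := pow_le_pow_left₀ (by linarith) h1 2
  calc (1 + ε) ^ 2 * Real.exp (1 - (1 + ε) ^ 2)
      ≤ Real.exp ε ^ 2 * Real.exp (1 - (1 + ε) ^ 2) :=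
        mul_le_mul_of_nonneg_right h2 (Real.exp_pos _).le
    _ = Real.exp (-ε ^ 2) := by
        rw [← Real.exp_nat_mul ε 2, ← Real.exp_add]; congr 1; push_cast; ring

lemma g_inner {ε : ℝ} (hε : 0 < ε) (hε1 : ε < 1) :
    (1 - ε) ^ 2 * Real.exp (1 - (1 - ε) ^ 2) ≤ Real.exp (-ε ^ 2) := by
  have h1 : 1 - ε ≤ Real.exp (-ε) := by have := Real.add_one_le_exp (-ε); linarith
  have h2 : (1 - ε) ^ 2 ≤ Real.exp (-ε) ^ 2 := pow_le_pow_left₀ (by linarith) h1 2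
  calc (1 - ε) ^ 2 * Real.exp (1 - (1 - ε) ^ 2)
      ≤ Real.exp (-ε) ^ 2 * Real.exp (1 - (1 - ε) ^ 2) :=
        mul_le_mul_of_nonneg_right h2 (Real.exp_pos _).le
    _ = Real.exp (-ε ^ 2) := by
        rw [← Real.exp_nat_mul (-ε) 2, ← Real.exp_add]; congr 1; push_cast; ring

lemma g_half {t : ℝ} (h0 : 0 ≤ t) :
    t * Real.exp (1 - t) ≤ 2 * Real.exp (-(1 / 2) * t) := by
  have h1 : t / 2 ≤ Real.exp (t / 2 - 1) := by
    have := Real.add_one_le_exp (t / 2 - 1); linarith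
  have hsplit : Real.exp (t / 2 - 1) * Real.exp (1 - t) = Real.exp (-(1 / 2) * t) := by
    rw [← Real.exp_add]; congr 1; ring
  calc t * Real.exp (1 - t) = 2 * (t / 2) * Real.exp (1 - t) := by ring
    _ ≤ 2 * Real.exp (t / 2 - 1) * Real.exp (1 - t) := by
        have := mul_le_mul_of_nonneg_right h1 (Real.exp_pos (1 - t)).le
        nlinarith [Real.exp_pos (1 - t)]
    _ = 2 * Real.exp (-(1 / 2) * t) := by rw [mul_assoc, hsplit]

lemma rhoGin_nonneg (n : ℕ) (z : ℂ) : 0 ≤ rhoGin n z := by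
  unfold rhoGin
  have : (0:ℝ) ≤ ∑ k ∈ Finset.range n, ((n : ℝ) * ‖z‖ ^ 2) ^ k / (Nat.factorial k : ℝ) :=
    Finset.sum_nonneg fun k _ => by positivity
  positivity

lemma rho_outer_bound {ε : ℝ} (hε : 0 < ε) (hε1 : ε < 1) {n : ℕ} (hn : 1 ≤ n) {z : ℂ}
    (hz : 1 + ε ≤ ‖z‖) :
    rhoGin n z ≤ (2 * Real.exp 1 / Real.pi) *
      (Real.exp (-(n : ℝ) * ε ^ 2) * Real.exp (-(1 / 2) * ‖z‖ ^ 2)) := by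
  set t : ℝ := ‖z‖ ^ 2 with htdef
  have ht0 : (1 + ε) ^ 2 ≤ t := by
    have := pow_le_pow_left₀ (by positivity) hz 2
    simpa [htdef] using this
  have ht1 : 1 ≤ t := le_trans (by nlinarith) ht0
  have hπ := Real.pi_pos
  set g : ℝ := t * Real.exp (1 - t) with hgdef
  have hg0 : 0 ≤ g := by positivity
  have hstep1 : rhoGin n z ≤ (1 / Real.pi) * g ^ n := by
    have h1 : rhoGin n z ≤ (1 / Real.pi) * Real.exp (-(n : ℝ) * t) * (t ^ n * Real.exp n) := by
      unfold rhoGin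
      refine mul_le_mul_of_nonneg_left (sum_bound_outer ht1 n) (by positivity)
    have halg : (1 / Real.pi) * Real.exp (-(n : ℝ) * t) * (t ^ n * Real.exp n)
        = (1 / Real.pi) * g ^ n := by
      rw [hgdef, mul_pow, ← Real.exp_nat_mul]
      have h2 : (n : ℝ) * (1 - t) = (n : ℝ) + (-(n : ℝ) * t) := by ring
      rw [h2, Real.exp_add]; ring
    linarith [halg ▸ h1]
  have hge : g ≤ Real.exp (-ε ^ 2) :=
    le_trans (g_decr (by nlinarith) ht0) (g_outer hε)
  have hgh : g ≤ 2 * Real.exp (-(1 / 2) * t) := g_half (by positivity)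
  have hpow : g ^ n ≤ Real.exp (-ε ^ 2) ^ (n - 1) * (2 * Real.exp (-(1 / 2) * t)) := by
    have : g ^ n = g ^ (n - 1) * g := by
      rw [← pow_succ, Nat.sub_add_cancel hn]
    rw [this]
    exact mul_le_mul (pow_le_pow_left₀ hg0 hge _) hgh hg0 (by positivity)
  have hexp : Real.exp (-ε ^ 2) ^ (n - 1) ≤ Real.exp (-(n : ℝ) * ε ^ 2) * Real.exp 1 := by
    rw [← Real.exp_nat_mul, ← Real.exp_add]
    refine Real.exp_le_exp.2 ?_
    have hcast : ((n - 1 : ℕ) : ℝ) = (n : ℝ) - 1 := by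
      rw [Nat.cast_sub hn]; simp
    rw [hcast]
    nlinarith
  calc rhoGin n z ≤ (1 / Real.pi) * g ^ n := hstep1
    _ ≤ (1 / Real.pi) * (Real.exp (-ε ^ 2) ^ (n - 1) * (2 * Real.exp (-(1 / 2) * t))) :=
        mul_le_mul_of_nonneg_left hpow (by positivity)
    _ ≤ (1 / Real.pi) * ((Real.exp (-(n : ℝ) * ε ^ 2) * Real.exp 1) *
        (2 * Real.exp (-(1 / 2) * t))) := by
        refine mul_le_mul_of_nonneg_left ?_ (by positivity)
        exact mul_le_mul_of_nonneg_right hexp (by positivity)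
    _ = (2 * Real.exp 1 / Real.pi) *
        (Real.exp (-(n : ℝ) * ε ^ 2) * Real.exp (-(1 / 2) * t)) := by ring

lemma rho_inner_bound {ε : ℝ} (hε : 0 < ε) (hε1 : ε < 1) (n : ℕ) {z : ℂ}
    (hz : ‖z‖ ≤ 1 - ε) :
    |rhoGin n z - 1 / Real.pi| ≤ (1 / Real.pi) * Real.exp (-(n : ℝ) * ε ^ 2) := by
  set t : ℝ := ‖z‖ ^ 2 with htdef
  have ht0 : 0 ≤ t := by positivity
  have htu : t ≤ (1 - ε) ^ 2 := by
    have := pow_le_pow_left₀ (norm_nonneg z) hz 2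
    simpa [htdef] using this
  have ht1 : t ≤ 1 := le_trans htu (by nlinarith)
  have hπ := Real.pi_pos
  have hS : ∑ k ∈ Finset.range n, ((n : ℝ) * t) ^ k / (Nat.factorial k : ℝ)
      ≤ Real.exp ((n : ℝ) * t) := Real.sum_le_exp_of_nonneg (by positivity) n
  have hrho : rhoGin n z = (1 / Real.pi) * Real.exp (-(n : ℝ) * t) *
      ∑ k ∈ Finset.range n, ((n : ℝ) * t) ^ k / (Nat.factorial k : ℝ) := rfl
  have hexpinv : Real.exp (-(n : ℝ) * t) * Real.exp ((n : ℝ) * t) = 1 := by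
    rw [← Real.exp_add]; simp
  have hle : rhoGin n z ≤ 1 / Real.pi := by
    rw [hrho]
    calc (1 / Real.pi) * Real.exp (-(n : ℝ) * t) *
        ∑ k ∈ Finset.range n, ((n : ℝ) * t) ^ k / (Nat.factorial k : ℝ)
        ≤ (1 / Real.pi) * Real.exp (-(n : ℝ) * t) * Real.exp ((n : ℝ) * t) :=
          mul_le_mul_of_nonneg_left hS (by positivity)
      _ = 1 / Real.pi := by rw [mul_assoc, hexpinv, mul_one]
  have hdiff : 1 / Real.pi - rhoGin n z ≤ (1 / Real.pi) * Real.exp (-(n : ℝ) * ε ^ 2) := by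
    have htail := exp_tail_bound ht0 ht1 n
    have hg : t * Real.exp (1 - t) ≤ Real.exp (-ε ^ 2) :=
      le_trans (g_incr ht0 htu (by nlinarith)) (g_inner hε hε1)
    have hgpow : (t * Real.exp (1 - t)) ^ n ≤ Real.exp (-(n : ℝ) * ε ^ 2) := by
      calc (t * Real.exp (1 - t)) ^ n ≤ Real.exp (-ε ^ 2) ^ n :=
            pow_le_pow_left₀ (by positivity) hg n
        _ = Real.exp (-(n : ℝ) * ε ^ 2) := by rw [← Real.exp_nat_mul]; ring_nf
    have halg : Real.exp (-(n : ℝ) * t) * (t ^ n * Real.exp n) = (t * Real.exp (1 - t)) ^ n := by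
      rw [mul_pow, ← Real.exp_nat_mul]
      have h2 : (n : ℝ) * (1 - t) = (n : ℝ) + (-(n : ℝ) * t) := by ring
      rw [h2, Real.exp_add]; ring
    have key : Real.exp (-(n : ℝ) * t) *
        (Real.exp ((n : ℝ) * t) - ∑ k ∈ Finset.range n, ((n : ℝ) * t) ^ k / (Nat.factorial k : ℝ))
        ≤ Real.exp (-(n : ℝ) * ε ^ 2) := by
      calc Real.exp (-(n : ℝ) * t) * (Real.exp ((n : ℝ) * t) -
          ∑ k ∈ Finset.range n, ((n : ℝ) * t) ^ k / (Nat.factorial k : ℝ))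
          ≤ Real.exp (-(n : ℝ) * t) * (t ^ n * Real.exp n) :=
            mul_le_mul_of_nonneg_left htail (by positivity)
        _ = (t * Real.exp (1 - t)) ^ n := halg
        _ ≤ Real.exp (-(n : ℝ) * ε ^ 2) := hgpow
    have hexpand : 1 / Real.pi - rhoGin n z = (1 / Real.pi) * (Real.exp (-(n : ℝ) * t) *
        (Real.exp ((n : ℝ) * t) -
          ∑ k ∈ Finset.range n, ((n : ℝ) * t) ^ k / (Nat.factorial k : ℝ))) := by
      rw [hrho, mul_sub, hexpinv]; ring
    rw [hexpand]
    exact mul_le_mul_of_nonneg_left key (by positivity)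
  rw [abs_sub_comm, abs_of_nonneg (by linarith)]
  linarith

lemma lintegral_gauss_R : ∫⁻ x : ℝ, ENNReal.ofReal (Real.exp (-(1 / 2) * x ^ 2))
    = ENNReal.ofReal (Real.sqrt (2 * Real.pi)) := by
  rw [← ofReal_integral_eq_lintegral_ofReal
    (integrable_exp_neg_mul_sq (by norm_num : (0:ℝ) < 1/2))
    (Filter.Eventually.of_forall fun x => (Real.exp_pos _).le)]
  rw [integral_gaussian]
  norm_num
  ring

lemma lintegral_gauss_C : ∫⁻ z : ℂ, ENNReal.ofReal (Real.exp (-(1 / 2) * ‖z‖ ^ 2))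
    = ENNReal.ofReal (2 * Real.pi) := by
  have habs : ∀ z : ℂ, ‖z‖ ^ 2 = z.re ^ 2 + z.im ^ 2 := fun z => by
    rw [Complex.sq_norm, Complex.normSq_apply]; ring
  have hsplit : ∀ z : ℂ, ENNReal.ofReal (Real.exp (-(1 / 2) * ‖z‖ ^ 2))
      = ENNReal.ofReal (Real.exp (-(1 / 2) * z.re ^ 2)) *
        ENNReal.ofReal (Real.exp (-(1 / 2) * z.im ^ 2)) := fun z => by
    rw [← ENNReal.ofReal_mul (Real.exp_pos _).le, ← Real.exp_add, habs]; ring_nf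
  simp_rw [hsplit]
  have hcomp := Complex.volume_preserving_equiv_real_prod.lintegral_comp
    (f := fun p : ℝ × ℝ => ENNReal.ofReal (Real.exp (-(1 / 2) * p.1 ^ 2)) *
      ENNReal.ofReal (Real.exp (-(1 / 2) * p.2 ^ 2)))
    (by fun_prop)
  calc ∫⁻ z : ℂ, ENNReal.ofReal (Real.exp (-(1 / 2) * z.re ^ 2)) *
        ENNReal.ofReal (Real.exp (-(1 / 2) * z.im ^ 2))
      = ∫⁻ p : ℝ × ℝ, ENNReal.ofReal (Real.exp (-(1 / 2) * p.1 ^ 2)) *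
        ENNReal.ofReal (Real.exp (-(1 / 2) * p.2 ^ 2)) := hcomp
    _ = (∫⁻ x : ℝ, ENNReal.ofReal (Real.exp (-(1 / 2) * x ^ 2))) *
        (∫⁻ y : ℝ, ENNReal.ofReal (Real.exp (-(1 / 2) * y ^ 2))) := by
        rw [MeasureTheory.Measure.volume_eq_prod, lintegral_prod_mul
          (f := fun x : ℝ => ENNReal.ofReal (Real.exp (-(1 / 2) * x ^ 2)))
          (g := fun y : ℝ => ENNReal.ofReal (Real.exp (-(1 / 2) * y ^ 2)))
          (by fun_prop) (by fun_prop)]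
    _ = ENNReal.ofReal (2 * Real.pi) := by
        rw [lintegral_gauss_R, ← ENNReal.ofReal_mul (Real.sqrt_nonneg _),
          Real.mul_self_sqrt (by positivity)]

lemma rhoGin_continuous (n : ℕ) : Continuous (rhoGin n) := by
  unfold rhoGin
  have h1 : Continuous fun z : ℂ => ‖z‖ ^ 2 := continuous_norm.pow 2
  exact (continuous_const.mul (Real.continuous_exp.comp (continuous_const.mul h1))).mul
    (continuous_finset_sum _ fun k _ => ((continuous_const.mul h1).pow k).div_const _)

lemma muBar_outer {ε : ℝ} (hε : 0 < ε) (hε1 : ε < 1) {n : ℕ} (hn : 1 ≤ n) :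
    muBarGin n ((ball (0 : ℂ) (1 + ε))ᶜ) ≤
      ENNReal.ofReal (4 * Real.exp 1 * Real.exp (-(n : ℝ) * ε ^ 2)) := by
  have hπ := Real.pi_pos
  set c : ℝ := (2 * Real.exp 1 / Real.pi) * Real.exp (-(n : ℝ) * ε ^ 2) with hc
  have hc0 : 0 ≤ c := by positivity
  have h1 : muBarGin n ((ball (0 : ℂ) (1 + ε))ᶜ)
      = ∫⁻ z in (ball (0 : ℂ) (1 + ε))ᶜ, ENNReal.ofReal (rhoGin n z) := by
    rw [muBarGin, withDensity_apply _ measurableSet_ball.compl]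
  have h2 : ∀ z ∈ (ball (0 : ℂ) (1 + ε))ᶜ, ENNReal.ofReal (rhoGin n z)
      ≤ ENNReal.ofReal (c * Real.exp (-(1 / 2) * ‖z‖ ^ 2)) := by
    intro z hz
    have hz' : 1 + ε ≤ ‖z‖ := by
      have := hz
      simp only [Set.mem_compl_iff, mem_ball, Complex.dist_eq, sub_zero, not_lt] at this
      exact this
    refine ENNReal.ofReal_le_ofReal ?_
    calc rhoGin n z ≤ (2 * Real.exp 1 / Real.pi) *
        (Real.exp (-(n : ℝ) * ε ^ 2) * Real.exp (-(1 / 2) * ‖z‖ ^ 2)) :=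
          rho_outer_bound hε hε1 hn hz'
      _ = c * Real.exp (-(1 / 2) * ‖z‖ ^ 2) := by rw [hc]; ring
  calc muBarGin n ((ball (0 : ℂ) (1 + ε))ᶜ)
      = ∫⁻ z in (ball (0 : ℂ) (1 + ε))ᶜ, ENNReal.ofReal (rhoGin n z) := h1
    _ ≤ ∫⁻ z in (ball (0 : ℂ) (1 + ε))ᶜ,
        ENNReal.ofReal (c * Real.exp (-(1 / 2) * ‖z‖ ^ 2)) :=
        setLIntegral_mono
          ((continuous_const.mul (Real.continuous_exp.comp
            (continuous_const.mul (continuous_norm.pow 2)))).measurable.ennreal_ofReal) h2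
    _ ≤ ∫⁻ z : ℂ, ENNReal.ofReal (c * Real.exp (-(1 / 2) * ‖z‖ ^ 2)) :=
        setLIntegral_le_lintegral _ _
    _ = ENNReal.ofReal c * ∫⁻ z : ℂ, ENNReal.ofReal (Real.exp (-(1 / 2) * ‖z‖ ^ 2)) := by
        simp_rw [ENNReal.ofReal_mul hc0]
        rw [lintegral_const_mul' _ _ ENNReal.ofReal_ne_top]
    _ = ENNReal.ofReal c * ENNReal.ofReal (2 * Real.pi) := by rw [lintegral_gauss_C]
    _ = ENNReal.ofReal (4 * Real.exp 1 * Real.exp (-(n : ℝ) * ε ^ 2)) := by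
        rw [← ENNReal.ofReal_mul hc0]
        congr 1
        rw [hc]
        field_simp
        ring

/-- For fixed `ε ∈ (0,1)` there is `C > 0` so that for all `n ≥ 1` and all balls
`B_R(z₀)` contained in `ℂ \ B_{1+ε}(0)` or in `B_{1-ε}(0)`:
`|μ̄_n(B_R(z₀)) − μ_∞(B_R(z₀))| ≤ C e^{-nε²}`. -/
theorem stmt1 (ε : ℝ) (hε : 0 < ε) (hε1 : ε < 1) :
    ∃ C > 0, ∀ n : ℕ, 1 ≤ n → ∀ (z₀ : ℂ) (R : ℝ),
      (ball z₀ R ⊆ (ball (0 : ℂ) (1 + ε))ᶜ ∨ ball z₀ R ⊆ ball (0 : ℂ) (1 - ε)) →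
      |(muBarGin n (ball z₀ R)).toReal - (muInf (ball z₀ R)).toReal| ≤
        C * Real.exp (-(n : ℝ) * ε ^ 2) := by
  have hπ := Real.pi_pos
  refine ⟨4 * Real.exp 1 + 1, by positivity, fun n hn z₀ R hcase => ?_⟩
  have hexppos : 0 < Real.exp (-(n : ℝ) * ε ^ 2) := Real.exp_pos _
  rcases hcase with hsub | hsub
  · -- outer case
    have hμ0 : muInf (ball z₀ R) = 0 := by
      rw [muInf, withDensity_apply _ measurableSet_ball]
      have hzero : ∀ᵐ z ∂(volume : Measure ℂ), z ∈ ball z₀ R →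
          ENNReal.ofReal (if ‖z‖ < 1 then 1 / Real.pi else 0) = 0 := by
        refine Filter.Eventually.of_forall fun z hz => ?_
        have h1 : 1 + ε ≤ ‖z‖ := by
          have := hsub hz
          simpa only [Set.mem_compl_iff, mem_ball, Complex.dist_eq, sub_zero, not_lt] using this
        rw [if_neg (by linarith), ENNReal.ofReal_zero]
      rw [setLIntegral_congr_fun_ae measurableSet_ball hzero]
      simp
    have hb : muBarGin n (ball z₀ R) ≤
        ENNReal.ofReal (4 * Real.exp 1 * Real.exp (-(n : ℝ) * ε ^ 2)) :=
      le_trans (measure_mono hsub) (muBar_outer hε hε1 hn)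
    have hb' : (muBarGin n (ball z₀ R)).toReal ≤ 4 * Real.exp 1 * Real.exp (-(n : ℝ) * ε ^ 2) := by
      have := ENNReal.toReal_mono ENNReal.ofReal_ne_top hb
      rwa [ENNReal.toReal_ofReal (by positivity)] at this
    rw [hμ0, ENNReal.toReal_zero, sub_zero, abs_of_nonneg ENNReal.toReal_nonneg]
    nlinarith
  · -- inner case
    set B := ball z₀ R with hB
    have hsub1 : B ⊆ closedBall (0 : ℂ) 1 :=
      hsub.trans (ball_subset_closedBall.trans (closedBall_subset_closedBall (by linarith)))
    have hInt : IntegrableOn (rhoGin n) B volume :=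
      (((rhoGin_continuous n).continuousOn).integrableOn_compact
        (isCompact_closedBall (0 : ℂ) 1)).mono_set hsub1
    have hμ1 : (muBarGin n B).toReal = ∫ z in B, rhoGin n z := by
      rw [muBarGin, withDensity_apply _ measurableSet_ball,
        ← ofReal_integral_eq_lintegral_ofReal hInt
          (Filter.Eventually.of_forall fun z => rhoGin_nonneg n z),
        ENNReal.toReal_ofReal (integral_nonneg fun z => rhoGin_nonneg n z)]
    have hvolfin : volume B < ⊤ := measure_ball_lt_top
    have hμ2 : (muInf B).toReal = ∫ z in B, (1 / Real.pi) := by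
      rw [muInf, withDensity_apply _ measurableSet_ball]
      have hone : ∀ᵐ z ∂(volume : Measure ℂ), z ∈ B →
          ENNReal.ofReal (if ‖z‖ < 1 then 1 / Real.pi else 0)
            = ENNReal.ofReal (1 / Real.pi) := by
        refine Filter.Eventually.of_forall fun z hz => ?_
        have h1 : ‖z‖ < 1 - ε := by
          have := hsub hz
          simpa only [mem_ball, Complex.dist_eq, sub_zero] using this
        rw [if_pos (by linarith)]
      rw [setLIntegral_congr_fun_ae measurableSet_ball hone, setLIntegral_const,
        setIntegral_const, ENNReal.toReal_mul, ENNReal.toReal_ofReal (by positivity),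
        smul_eq_mul, Measure.real]
      ring
    have hvol : (volume B).toReal ≤ Real.pi := by
      have h1 : volume B ≤ volume (ball (0 : ℂ) 1) :=
        measure_mono (hsub.trans (ball_subset_ball (by linarith)))
      have h2 : (volume (ball (0 : ℂ) 1)).toReal = Real.pi := by
        rw [Complex.volume_ball]
        simp
      rw [← h2]
      exact ENNReal.toReal_mono measure_ball_lt_top.ne h1
    have hIntc : IntegrableOn (fun _ : ℂ => 1 / Real.pi) B volume :=
      integrableOn_const hvolfin.ne
    have hkey : |∫ z in B, (rhoGin n z - 1 / Real.pi)| ≤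
        ((1 / Real.pi) * Real.exp (-(n : ℝ) * ε ^ 2)) * (volume B).toReal := by
      rw [← Real.norm_eq_abs]
      refine norm_setIntegral_le_of_norm_le_const hvolfin (fun z hz => ?_)
      · rw [Real.norm_eq_abs]
        refine rho_inner_bound hε hε1 n ?_
        have := hsub hz
        simp only [mem_ball, Complex.dist_eq, sub_zero] at this
        linarith
    rw [hμ1, hμ2, ← integral_sub hInt hIntc]
    calc |∫ z in B, (rhoGin n z - 1 / Real.pi)|
        ≤ ((1 / Real.pi) * Real.exp (-(n : ℝ) * ε ^ 2)) * (volume B).toReal := hkey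
      _ ≤ ((1 / Real.pi) * Real.exp (-(n : ℝ) * ε ^ 2)) * Real.pi := by
          refine mul_le_mul_of_nonneg_left hvol (by positivity)
      _ = Real.exp (-(n : ℝ) * ε ^ 2) := by field_simp
      _ ≤ (4 * Real.exp 1 + 1) * Real.exp (-(n : ℝ) * ε ^ 2) := by
          nlinarith [Real.exp_pos (1 : ℝ)]
end

section
/- Fix integers m ≥ 1 and n ≥ 1 and let γ_n be the positively oriented boundary of the rectangle with vertices 3/4 − i, n + 1/4 − i, n + 1/4 + i, 3/4 + i. Then for every real x > 0: (1/(2πi)) ∮_{γ_n} x^{t−1} · cot(πt) / Γ(t)^m dt = Σ_{k=0}^{n−1} x^k / (π (k!)^m). -/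
open MeasureTheory

open Complex Set Filter Topology intervalIntegral

/-- The contour integral over the positively oriented boundary `γ_n` of the rectangle with
vertices `3/4 − i`, `n + 1/4 − i`, `n + 1/4 + i`, `3/4 + i`: the sum of the four integrals
over its oriented sides. -/
noncomputable def rectContour (n : ℕ) (g : ℂ → ℂ) : ℂ :=
  (∫ x in (3 / 4 : ℝ)..((n : ℝ) + 1 / 4), g ((x : ℂ) - Complex.I)) +
    (∫ y in (-1 : ℝ)..(1 : ℝ), g (((n : ℝ) + 1 / 4 : ℝ) + (y : ℂ) * Complex.I) * Complex.I) -
    (∫ x in (3 / 4 : ℝ)..((n : ℝ) + 1 / 4), g ((x : ℂ) + Complex.I)) -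
    (∫ y in (-1 : ℝ)..(1 : ℝ), g ((3 / 4 : ℝ) + (y : ℂ) * Complex.I) * Complex.I)

lemma removable_finset (S : Finset ℂ) :
    ∀ (U : Set ℂ), IsOpen U → ∀ (f : ℂ → ℂ),
    DifferentiableOn ℂ f (U \ (S : Set ℂ)) →
    (∀ c ∈ S, Tendsto (fun z => (z - c) * f z) (𝓝[≠] c) (𝓝 0)) →
    ∃ F : ℂ → ℂ, DifferentiableOn ℂ F U ∧ ∀ z ∈ U \ (S : Set ℂ), F z = f z := by
  induction S using Finset.induction with
  | empty => intro U hU f hd _; exact ⟨f, by simpa using hd, fun z _ => rfl⟩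
  | @insert c S' hc IH =>
    intro U hU f hd ho
    have hUc : IsOpen (U \ {c}) := hU.sdiff isClosed_singleton
    have hd' : DifferentiableOn ℂ f ((U \ {c}) \ (S' : Set ℂ)) := by
      refine hd.mono ?_
      intro z hz
      simp only [mem_diff, mem_singleton_iff, Finset.coe_insert, mem_insert_iff] at *
      tauto
    obtain ⟨F', hF'd, hF'eq⟩ := IH (U \ {c}) hUc f hd' (fun d hd => ho d (Finset.mem_insert_of_mem hd))
    by_cases hcU : c ∈ U
    · -- F' eventually equals f near c (punctured)
      have hnhds : (U \ (S' : Set ℂ)) ∈ 𝓝 c := by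
        refine Filter.inter_mem (hU.mem_nhds hcU) ?_
        exact (S'.finite_toSet.isClosed.isOpen_compl).mem_nhds (by simpa using hc)
      have hev : F' =ᶠ[𝓝[≠] c] f := by
        filter_upwards [self_mem_nhdsWithin, nhdsWithin_le_nhds hnhds] with z hz1 hz2
        exact hF'eq z ⟨⟨hz2.1, hz1⟩, hz2.2⟩
      have htend : Tendsto (fun z => (z - c) * F' z) (𝓝[≠] c) (𝓝 0) := by
        refine (ho c (Finset.mem_insert_self _ _)).congr' ?_
        filter_upwards [hev] with z hz using by rw [hz]
      have hlo : (fun z => F' z - F' c) =o[𝓝[≠] c] fun z => (z - c)⁻¹ := by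
        rw [Asymptotics.isLittleO_iff_tendsto']
        · have h2 : Tendsto (fun z : ℂ => (z - c) * F' c) (𝓝[≠] c) (𝓝 0) := by
            have : Tendsto (fun z : ℂ => (z - c) * F' c) (𝓝 c) (𝓝 ((c - c) * F' c)) :=
              ((continuous_id.sub continuous_const).mul continuous_const).tendsto c
            simpa using this.mono_left nhdsWithin_le_nhds
          have := htend.sub h2
          rw [sub_zero] at this
          refine this.congr' ?_
          filter_upwards [self_mem_nhdsWithin] with z hz
          have hzc : z - c ≠ 0 := sub_ne_zero.2 hz
          field_simp
        · filter_upwards [self_mem_nhdsWithin] with z hz h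
          exact absurd (inv_eq_zero.mp h) (sub_ne_zero.2 hz)
      have hF : DifferentiableOn ℂ (Function.update F' c (limUnder (𝓝[≠] c) F')) U :=
        Complex.differentiableOn_update_limUnder_of_isLittleO (hU.mem_nhds hcU)
          (by simpa [diff_eq] using hF'd) hlo
      refine ⟨_, hF, fun z hz => ?_⟩
      have hzc : z ≠ c := by
        intro h; apply hz.2; rw [h]; exact Finset.mem_insert_self _ _
      rw [Function.update_of_ne hzc]
      refine hF'eq z ⟨⟨hz.1, hzc⟩, fun hzS => hz.2 (Finset.mem_insert_of_mem hzS)⟩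
    · have : U \ {c} = U := by
        ext z; simp only [mem_diff, mem_singleton_iff, and_iff_left_iff_imp]
        rintro hz rfl; exact hcU hz
      rw [this] at hF'd hF'eq
      refine ⟨F', hF'd, fun z hz => hF'eq z ⟨hz.1, fun h => hz.2 (Finset.mem_insert_of_mem h)⟩⟩


lemma horiz_ftc (a b : ℝ) (c : ℂ) (hc : c.im ≠ 0) :
    ∫ x in a..b, ((x : ℂ) + c)⁻¹ = Complex.log ((b : ℂ) + c) - Complex.log ((a : ℂ) + c) := by
  have hne : ∀ x : ℝ, (x : ℂ) + c ∈ Complex.slitPlane := fun x => by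
    rw [Complex.mem_slitPlane_iff]
    right; simpa using hc
  have hder : ∀ x ∈ Set.uIcc a b,
      HasDerivAt (fun x : ℝ => Complex.log ((x : ℂ) + c)) (((x : ℂ) + c)⁻¹) x := by
    intro x _
    have h1 : HasDerivAt (fun z : ℂ => Complex.log (z + c)) (((x : ℂ) + c)⁻¹) (x : ℂ) := by
      have hinner : HasDerivAt (fun z : ℂ => z + c) 1 (x : ℂ) :=
        (hasDerivAt_id _).add_const c
      simpa [Function.comp_def] using (Complex.hasDerivAt_log (hne x)).comp (x : ℂ) hinner
    exact h1.comp_ofReal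
  have hint : IntervalIntegrable (fun x : ℝ => ((x : ℂ) + c)⁻¹) MeasureTheory.volume a b := by
    refine Continuous.intervalIntegrable ?_ a b
    refine (Complex.continuous_ofReal.add continuous_const).inv₀ fun x => ?_
    exact Complex.slitPlane_ne_zero (hne x)
  exact integral_eq_sub_of_hasDerivAt hder hint

lemma vert_ftc (a : ℝ) (ha : 0 < a) :
    ∫ y in (-1:ℝ)..1, ((a : ℂ) + (y:ℂ) * Complex.I)⁻¹ * Complex.I
      = Complex.log ((a : ℂ) + Complex.I) - Complex.log ((a : ℂ) - Complex.I) := by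
  have hne : ∀ y : ℝ, (a : ℂ) + (y:ℂ) * Complex.I ∈ Complex.slitPlane := fun y => by
    rw [Complex.mem_slitPlane_iff]; left; simpa using ha
  have hder : ∀ y ∈ Set.uIcc (-1:ℝ) 1,
      HasDerivAt (fun y : ℝ => Complex.log ((a : ℂ) + (y:ℂ) * Complex.I))
        (((a : ℂ) + (y:ℂ) * Complex.I)⁻¹ * Complex.I) y := by
    intro y _
    have h1 : HasDerivAt (fun z : ℂ => Complex.log ((a:ℂ) + z * Complex.I))
        (((a : ℂ) + (y:ℂ) * Complex.I)⁻¹ * Complex.I) (y : ℂ) := by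
      have hinner : HasDerivAt (fun z : ℂ => (a:ℂ) + z * Complex.I) Complex.I (y : ℂ) := by
        simpa using ((hasDerivAt_id ((y:ℝ) : ℂ)).mul_const Complex.I).const_add (a:ℂ)
      exact (Complex.hasDerivAt_log (hne y)).comp (y : ℂ) hinner
    exact h1.comp_ofReal
  have hint : IntervalIntegrable (fun y : ℝ => ((a : ℂ) + (y:ℂ) * Complex.I)⁻¹ * Complex.I)
      MeasureTheory.volume (-1) 1 := by
    refine Continuous.intervalIntegrable ?_ _ _
    exact ((continuous_const.add (Complex.continuous_ofReal.mul continuous_const)).inv₀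
      fun y => Complex.slitPlane_ne_zero (hne y)).mul continuous_const
  have := integral_eq_sub_of_hasDerivAt hder hint
  rw [this]
  norm_num
  rw [sub_eq_add_neg]

lemma vert_ftc' (a : ℝ) (ha : 0 < a) :
    ∫ y in (-1:ℝ)..1, ((a : ℂ) - (y:ℂ) * Complex.I)⁻¹ * -Complex.I
      = Complex.log ((a : ℂ) - Complex.I) - Complex.log ((a : ℂ) + Complex.I) := by
  have hne : ∀ y : ℝ, (a : ℂ) - (y:ℂ) * Complex.I ∈ Complex.slitPlane := fun y => by
    rw [Complex.mem_slitPlane_iff]; left; simpa using ha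
  have hder : ∀ y ∈ Set.uIcc (-1:ℝ) 1,
      HasDerivAt (fun y : ℝ => Complex.log ((a : ℂ) - (y:ℂ) * Complex.I))
        (((a : ℂ) - (y:ℂ) * Complex.I)⁻¹ * -Complex.I) y := by
    intro y _
    have h1 : HasDerivAt (fun z : ℂ => Complex.log ((a:ℂ) - z * Complex.I))
        (((a : ℂ) - (y:ℂ) * Complex.I)⁻¹ * -Complex.I) (y : ℂ) := by
      have hinner : HasDerivAt (fun z : ℂ => (a:ℂ) - z * Complex.I) (-Complex.I) (y : ℂ) := by
        simpa using ((hasDerivAt_id ((y:ℝ) : ℂ)).mul_const Complex.I).const_sub (a:ℂ)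
      exact (Complex.hasDerivAt_log (hne y)).comp (y : ℂ) hinner
    exact h1.comp_ofReal
  have hint : IntervalIntegrable (fun y : ℝ => ((a : ℂ) - (y:ℂ) * Complex.I)⁻¹ * -Complex.I)
      MeasureTheory.volume (-1) 1 := by
    refine Continuous.intervalIntegrable ?_ _ _
    exact ((continuous_const.sub (Complex.continuous_ofReal.mul continuous_const)).inv₀
      fun y => Complex.slitPlane_ne_zero (hne y)).mul continuous_const
  have := integral_eq_sub_of_hasDerivAt hder hint
  rw [this]
  norm_num

lemma rect_inv (n k : ℕ) (hk1 : 1 ≤ k) (hkn : k ≤ n) :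
    rectContour n (fun z => (z - (k : ℂ))⁻¹) = 2 * (Real.pi : ℂ) * Complex.I := by
  have hk1' : (1:ℝ) ≤ k := by exact_mod_cast hk1
  have hkn' : (k:ℝ) ≤ n := by exact_mod_cast hkn
  set u : ℝ := (n:ℝ) + 1/4 - k with hu_def
  set v : ℝ := (k:ℝ) - 3/4 with hv_def
  have hu : 0 < u := by rw [hu_def]; linarith
  have hv : 0 < v := by rw [hv_def]; linarith
  set w : ℂ := (v:ℂ) + Complex.I with hw_def
  have hwim : w.im = 1 := by simp [hw_def]
  -- the four side integrals
  have hB : (∫ x in (3/4:ℝ)..((n:ℝ)+1/4), (((x:ℂ) - Complex.I) - (k:ℂ))⁻¹)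
      = Complex.log ((u:ℂ) - Complex.I) - Complex.log (-w) := by
    have h1 : (∫ x in (3/4:ℝ)..((n:ℝ)+1/4), (((x:ℂ) - Complex.I) - (k:ℂ))⁻¹)
        = ∫ x in (3/4:ℝ)..((n:ℝ)+1/4), ((x:ℂ) + (-Complex.I - (k:ℂ)))⁻¹ := by
      refine intervalIntegral.integral_congr fun x _ => ?_
      congr 1; ring
    rw [h1, horiz_ftc _ _ _ (by simp)]
    congr 1
    · congr 1; rw [hu_def]; push_cast; ring
    · congr 1; rw [hw_def, hv_def]; push_cast; ring
  have hT : (∫ x in (3/4:ℝ)..((n:ℝ)+1/4), (((x:ℂ) + Complex.I) - (k:ℂ))⁻¹)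
      = Complex.log ((u:ℂ) + Complex.I) - Complex.log (-(starRingEnd ℂ) w) := by
    have h1 : (∫ x in (3/4:ℝ)..((n:ℝ)+1/4), (((x:ℂ) + Complex.I) - (k:ℂ))⁻¹)
        = ∫ x in (3/4:ℝ)..((n:ℝ)+1/4), ((x:ℂ) + (Complex.I - (k:ℂ)))⁻¹ := by
      refine intervalIntegral.integral_congr fun x _ => ?_
      congr 1; ring
    rw [h1, horiz_ftc _ _ _ (by simp)]
    congr 1
    · congr 1; rw [hu_def]; push_cast; ring
    · congr 1
      rw [hw_def, hv_def, map_add, Complex.conj_I, Complex.conj_ofReal]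
      push_cast; ring
  have hR : (∫ y in (-1:ℝ)..1, ((((n:ℝ) + 1/4 : ℝ):ℂ) + (y:ℂ) * Complex.I - (k:ℂ))⁻¹ * Complex.I)
      = Complex.log ((u:ℂ) + Complex.I) - Complex.log ((u:ℂ) - Complex.I) := by
    have h1 : (∫ y in (-1:ℝ)..1, ((((n:ℝ) + 1/4 : ℝ):ℂ) + (y:ℂ) * Complex.I - (k:ℂ))⁻¹ * Complex.I)
        = ∫ y in (-1:ℝ)..1, ((u:ℂ) + (y:ℂ) * Complex.I)⁻¹ * Complex.I := by
      refine intervalIntegral.integral_congr fun y _ => ?_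
      congr 2; rw [hu_def]; push_cast; ring
    rw [h1, vert_ftc u hu]
  have hL : (∫ y in (-1:ℝ)..1, (((3/4 : ℝ):ℂ) + (y:ℂ) * Complex.I - (k:ℂ))⁻¹ * Complex.I)
      = Complex.log ((starRingEnd ℂ) w) - Complex.log w := by
    have h1 : (∫ y in (-1:ℝ)..1, (((3/4 : ℝ):ℂ) + (y:ℂ) * Complex.I - (k:ℂ))⁻¹ * Complex.I)
        = ∫ y in (-1:ℝ)..1, ((v:ℂ) - (y:ℂ) * Complex.I)⁻¹ * -Complex.I := by
      refine intervalIntegral.integral_congr fun y _ => ?_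
      rw [show ((3/4 : ℝ):ℂ) + (y:ℂ) * Complex.I - (k:ℂ) = -((v:ℂ) - (y:ℂ) * Complex.I) by
        rw [hv_def]; push_cast; ring]
      rw [inv_neg]; ring
    rw [h1, vert_ftc' v hv]
    congr 2
    rw [hw_def, map_add, Complex.conj_I, Complex.conj_ofReal, sub_eq_add_neg]
  -- assemble
  have harg : w.arg ≠ Real.pi := by
    intro h
    have := (Complex.arg_eq_pi_iff.mp h).2
    rw [hwim] at this; norm_num at this
  have hargneg : (-w).arg ≠ Real.pi := by
    intro h
    have := (Complex.arg_eq_pi_iff.mp h).2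
    simp [hwim] at this
  have hlogconj : Complex.log ((starRingEnd ℂ) w) = (starRingEnd ℂ) (Complex.log w) :=
    Complex.log_conj w harg
  have hlognegconj : Complex.log (-(starRingEnd ℂ) w) = (starRingEnd ℂ) (Complex.log (-w)) := by
    rw [← map_neg]; exact Complex.log_conj (-w) hargneg
  have hargneg' : (-w).arg = w.arg - Real.pi :=
    Complex.arg_neg_eq_arg_sub_pi_of_im_pos (by rw [hwim]; norm_num)
  unfold rectContour
  rw [hB, hR, hT, hL, hlogconj, hlognegconj]
  have e1 : Complex.log w - (starRingEnd ℂ) (Complex.log w)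
      = (2 * (Complex.log w).im : ℝ) * Complex.I := Complex.sub_conj _
  have e2 : Complex.log (-w) - (starRingEnd ℂ) (Complex.log (-w))
      = (2 * (Complex.log (-w)).im : ℝ) * Complex.I := Complex.sub_conj _
  have him1 : (Complex.log w).im = w.arg := Complex.log_im w
  have him2 : (Complex.log (-w)).im = w.arg - Real.pi := by
    rw [Complex.log_im, hargneg']
  have : Complex.log ((u:ℂ) - Complex.I) - Complex.log (-w)
      + (Complex.log ((u:ℂ) + Complex.I) - Complex.log ((u:ℂ) - Complex.I))
      - (Complex.log ((u:ℂ) + Complex.I) - (starRingEnd ℂ) (Complex.log (-w)))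
      - ((starRingEnd ℂ) (Complex.log w) - Complex.log w)
      = (Complex.log w - (starRingEnd ℂ) (Complex.log w))
        - (Complex.log (-w) - (starRingEnd ℂ) (Complex.log (-w))) := by ring
  rw [this, e1, e2, him1, him2]
  push_cast
  ring

def sides (n : ℕ) : Set ℂ :=
  ((fun x : ℝ => (x:ℂ) - Complex.I) '' (Set.uIcc (3/4) ((n:ℝ)+1/4))) ∪
  ((fun x : ℝ => (x:ℂ) + Complex.I) '' (Set.uIcc (3/4) ((n:ℝ)+1/4))) ∪
  ((fun y : ℝ => ((((n:ℝ)+1/4 : ℝ)):ℂ) + (y:ℂ)*Complex.I) '' (Set.uIcc (-1) 1)) ∪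
  ((fun y : ℝ => ((3/4:ℝ):ℂ) + (y:ℂ)*Complex.I) '' (Set.uIcc (-1) 1))

lemma rectContour_congr (n : ℕ) (g h : ℂ → ℂ) (he : Set.EqOn g h (sides n)) :
    rectContour n g = rectContour n h := by
  unfold rectContour
  congr 1
  · congr 1
    · congr 1
      · refine integral_congr fun x hx => he (by left; left; left; exact ⟨x, hx, rfl⟩)
      · refine integral_congr fun y hy => ?_
        rw [he (by left; right; exact ⟨y, hy, rfl⟩)]
    · refine integral_congr fun x hx => he (by left; left; right; exact ⟨x, hx, rfl⟩)
  · refine integral_congr fun y hy => ?_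
    rw [he (by right; exact ⟨y, hy, rfl⟩)]

lemma sides_integrable (n : ℕ) (g : ℂ → ℂ) (T : Set ℂ) (hT : sides n ⊆ T)
    (hg : ContinuousOn g T) :
    IntervalIntegrable (fun x : ℝ => g ((x:ℂ) - Complex.I)) MeasureTheory.volume (3/4) ((n:ℝ)+1/4) ∧
    IntervalIntegrable (fun x : ℝ => g ((x:ℂ) + Complex.I)) MeasureTheory.volume (3/4) ((n:ℝ)+1/4) ∧
    IntervalIntegrable (fun y : ℝ => g (((((n:ℝ)+1/4 : ℝ)):ℂ) + (y:ℂ)*Complex.I) * Complex.I)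
      MeasureTheory.volume (-1) 1 ∧
    IntervalIntegrable (fun y : ℝ => g (((3/4:ℝ):ℂ) + (y:ℂ)*Complex.I) * Complex.I)
      MeasureTheory.volume (-1) 1 := by
  have hc1 : Continuous fun x : ℝ => (x:ℂ) - Complex.I :=
    Complex.continuous_ofReal.sub continuous_const
  have hc2 : Continuous fun x : ℝ => (x:ℂ) + Complex.I :=
    Complex.continuous_ofReal.add continuous_const
  have hc3 : Continuous fun y : ℝ => ((((n:ℝ)+1/4 : ℝ)):ℂ) + (y:ℂ)*Complex.I :=
    continuous_const.add (Complex.continuous_ofReal.mul continuous_const)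
  have hc4 : Continuous fun y : ℝ => ((3/4:ℝ):ℂ) + (y:ℂ)*Complex.I :=
    continuous_const.add (Complex.continuous_ofReal.mul continuous_const)
  refine ⟨?_, ?_, ?_, ?_⟩
  · exact (hg.comp hc1.continuousOn fun x hx => hT (by left; left; left; exact ⟨x, hx, rfl⟩)).intervalIntegrable
  · exact (hg.comp hc2.continuousOn fun x hx => hT (by left; left; right; exact ⟨x, hx, rfl⟩)).intervalIntegrable
  · exact ((hg.comp hc3.continuousOn fun y hy => hT (by left; right; exact ⟨y, hy, rfl⟩)).mul
      continuousOn_const).intervalIntegrable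
  · exact ((hg.comp hc4.continuousOn fun y hy => hT (by right; exact ⟨y, hy, rfl⟩)).mul
      continuousOn_const).intervalIntegrable

lemma rectContour_add (n : ℕ) (g h : ℂ → ℂ) (T : Set ℂ) (hT : sides n ⊆ T)
    (hg : ContinuousOn g T) (hh : ContinuousOn h T) :
    rectContour n (fun z => g z + h z) = rectContour n g + rectContour n h := by
  obtain ⟨hg1, hg2, hg3, hg4⟩ := sides_integrable n g T hT hg
  obtain ⟨hh1, hh2, hh3, hh4⟩ := sides_integrable n h T hT hh
  unfold rectContour
  simp only [add_mul]
  rw [integral_add hg1 hh1, integral_add hg2 hh2, integral_add hg3 hh3, integral_add hg4 hh4]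
  ring

lemma rectContour_sum {ι : Type*} (n : ℕ) (s : Finset ι) (f : ι → ℂ → ℂ) (T : Set ℂ)
    (hT : sides n ⊆ T) (hf : ∀ i ∈ s, ContinuousOn (f i) T) :
    rectContour n (fun z => ∑ i ∈ s, f i z) = ∑ i ∈ s, rectContour n (f i) := by
  classical
  induction s using Finset.induction with
  | empty => simp [rectContour]
  | @insert a s ha IH =>
    rw [Finset.sum_insert ha]
    have h1 : rectContour n (fun z => f a z + ∑ i ∈ s, f i z)
        = rectContour n (f a) + rectContour n (fun z => ∑ i ∈ s, f i z) := by
      refine rectContour_add n _ _ T hT (hf a (Finset.mem_insert_self a s)) ?_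
      exact continuousOn_finset_sum s fun i hi => hf i (Finset.mem_insert_of_mem hi)
    simp only [Finset.sum_insert ha]
    rw [h1, IH fun i hi => hf i (Finset.mem_insert_of_mem hi)]

lemma rectContour_const_mul (n : ℕ) (c : ℂ) (g : ℂ → ℂ) :
    rectContour n (fun z => c * g z) = c * rectContour n g := by
  unfold rectContour
  simp only [mul_assoc]
  rw [intervalIntegral.integral_const_mul, intervalIntegral.integral_const_mul, intervalIntegral.integral_const_mul, intervalIntegral.integral_const_mul]
  ring

lemma rectContour_eq_zero (n : ℕ) (hn : 1 ≤ n) (F : ℂ → ℂ)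
    (hF : DifferentiableOn ℂ F (Set.uIcc (3/4:ℝ) ((n:ℝ)+1/4) ×ℂ Set.uIcc (-1:ℝ) 1)) :
    rectContour n F = 0 := by
  have h := Complex.integral_boundary_rect_eq_zero_of_differentiableOn F
    ⟨3/4, -1⟩ ⟨(n:ℝ)+1/4, 1⟩ (by exact hF)
  unfold rectContour
  simp only [smul_eq_mul] at h
  have e1 : (∫ x in (3/4:ℝ)..((n:ℝ)+1/4), F ((x:ℂ) - Complex.I))
      = ∫ x in (3/4:ℝ)..((n:ℝ)+1/4), F ((x:ℂ) + ((-1:ℝ):ℂ) * Complex.I) := by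
    refine integral_congr fun x hx => ?_
    congr 1; push_cast; ring
  have e2 : (∫ x in (3/4:ℝ)..((n:ℝ)+1/4), F ((x:ℂ) + Complex.I))
      = ∫ x in (3/4:ℝ)..((n:ℝ)+1/4), F ((x:ℂ) + ((1:ℝ):ℂ) * Complex.I) := by
    refine integral_congr fun x hx => ?_
    congr 1; push_cast; ring
  have e3 : (∫ y in (-1:ℝ)..1, F (((((n:ℝ)+1/4 : ℝ)):ℂ) + (y:ℂ)*Complex.I) * Complex.I)
      = (∫ y in (-1:ℝ)..1, F (((((n:ℝ)+1/4 : ℝ)):ℂ) + (y:ℂ)*Complex.I)) * Complex.I :=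
    integral_mul_const _ _
  have e4 : (∫ y in (-1:ℝ)..1, F (((3/4:ℝ):ℂ) + (y:ℂ)*Complex.I) * Complex.I)
      = (∫ y in (-1:ℝ)..1, F (((3/4:ℝ):ℂ) + (y:ℂ)*Complex.I)) * Complex.I :=
    integral_mul_const _ _
  rw [e1, e2, e3, e4]
  push_cast at h ⊢
  linear_combination h

section Main
variable (m n : ℕ) (x : ℝ)

noncomputable def myf : ℂ → ℂ := fun t =>
  Complex.exp ((t - 1) * (Real.log x : ℂ)) * Complex.cot (Real.pi * t) / Complex.Gamma t ^ m

noncomputable def myr : ℕ → ℂ := fun k =>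
  Complex.exp (((k : ℂ) - 1) * (Real.log x : ℂ)) / ((Real.pi : ℂ) * Complex.Gamma k ^ m)

def myU : Set ℂ := Complex.re ⁻¹' (Set.Ioo (1/2 : ℝ) ((n:ℝ) + 1/2))

noncomputable def myS : Finset ℂ := (Finset.Icc 1 n).image (fun k : ℕ => (k : ℂ))

lemma myU_open : IsOpen (myU n) := isOpen_Ioo.preimage Complex.continuous_re

lemma mem_myS {z : ℂ} : z ∈ myS n ↔ ∃ k : ℕ, 1 ≤ k ∧ k ≤ n ∧ (k : ℂ) = z := by
  simp [myS, Finset.mem_image, Finset.mem_Icc, and_assoc]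

lemma sin_ne_myU {z : ℂ} (hz : z ∈ myU n \ (myS n : Set ℂ)) :
    Complex.sin ((Real.pi : ℂ) * z) ≠ 0 := by
  intro h
  rw [Complex.sin_eq_zero_iff] at h
  obtain ⟨j, hj⟩ := h
  have hz' : z = (j : ℂ) := by
    have hpi : (Real.pi : ℂ) ≠ 0 := by exact_mod_cast Real.pi_ne_zero
    have hpi' : (Real.pi : ℂ) ≠ 0 := hpi
    have h2 : (Real.pi : ℂ) * z = (Real.pi : ℂ) * (j : ℂ) := by rw [hj]; ring
    exact mul_left_cancel₀ hpi' h2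
  have hre := hz.1
  simp only [myU, Set.mem_preimage, Set.mem_Ioo, hz'] at hre
  rw [Complex.intCast_re] at hre
  have h1 : 1 ≤ j := by
    by_contra h
    push_neg at h
    have hj0 : j ≤ 0 := by omega
    have : (j:ℝ) ≤ 0 := by exact_mod_cast hj0
    linarith [hre.1]
  have h2 : j ≤ n := by
    by_contra h
    push_neg at h
    have : ((n:ℤ):ℝ) + 1 ≤ (j:ℝ) := by exact_mod_cast Int.lt_iff_add_one_le.mp h
    push_cast at this
    linarith [hre.2]
  refine hz.2 ((mem_myS n).mpr ⟨j.toNat, ?_, ?_, ?_⟩)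
  · omega
  · omega
  · rw [hz']
    rw [show ((j.toNat : ℕ) : ℂ) = ((j.toNat : ℤ) : ℂ) by push_cast; ring,
      Int.toNat_of_nonneg (by omega : (0:ℤ) ≤ j)]

lemma myf_eq (t : ℂ) : myf m x t =
    (Complex.exp ((t - 1) * (Real.log x : ℂ)) * ((Complex.Gamma t)⁻¹)^m)
      * (Complex.cos ((Real.pi : ℂ) * t) / Complex.sin ((Real.pi : ℂ) * t)) := by
  rw [myf, Complex.cot_eq_cos_div_sin, div_eq_mul_inv, ← inv_pow]
  ring

lemma myG_diff : DifferentiableOn ℂ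
    (fun z => myf m x z - ∑ k ∈ Finset.Icc 1 n, myr m x k * (z - (k:ℂ))⁻¹)
    (myU n \ (myS n : Set ℂ)) := by
  intro z hz
  refine DifferentiableAt.differentiableWithinAt ?_
  have hdf : DifferentiableAt ℂ (myf m x) z := by
    have h1 : DifferentiableAt ℂ (fun t : ℂ => Complex.exp ((t - 1) * (Real.log x : ℂ))) z :=
      (((differentiable_id.sub_const 1).mul_const _) z).cexp
    have h2 : DifferentiableAt ℂ (fun t : ℂ => ((Complex.Gamma t)⁻¹)^m) z :=
      (Complex.differentiable_one_div_Gamma.pow m) z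
    have h3 : DifferentiableAt ℂ (fun t : ℂ => Complex.cos ((Real.pi : ℂ) * t)
        / Complex.sin ((Real.pi : ℂ) * t)) z := by
      refine DifferentiableAt.div ?_ ?_ (sin_ne_myU n hz)
      · exact (Complex.differentiable_cos.comp ((differentiable_id).const_mul _)) z
      · exact (Complex.differentiable_sin.comp ((differentiable_id).const_mul _)) z
    have := (h1.mul h2).mul h3
    refine this.congr_of_eventuallyEq (Filter.Eventually.of_forall fun t => ?_)
    rw [myf_eq]
    rfl
  refine hdf.sub ?_
  refine DifferentiableAt.fun_sum fun j hj => ?_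
  refine DifferentiableAt.const_mul ?_ _
  refine DifferentiableAt.inv ((differentiable_id.sub_const _) z) ?_
  rw [sub_ne_zero]
  intro hzj
  rw [Finset.mem_Icc] at hj
  exact hz.2 ((mem_myS n).mpr ⟨j, hj.1, hj.2, hzj.symm⟩)
end Main

lemma tendsto_sub_mul_cot (k : ℕ) :
    Tendsto (fun z : ℂ => (z - k) * Complex.cot (Real.pi * z)) (𝓝[≠] (k : ℂ))
      (𝓝 ((Real.pi : ℂ)⁻¹)) := by
  set c : ℂ := (k : ℂ)
  have hsin0 : Complex.sin ((Real.pi : ℂ) * c) = 0 := by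
    rw [mul_comm]
    rw [show (c * (Real.pi : ℂ)) = (((k * Real.pi : ℝ) : ℝ) : ℂ) by push_cast; ring]
    rw [← Complex.ofReal_sin, Real.sin_nat_mul_pi]
    norm_num
  set C : ℂ := Complex.cos ((Real.pi : ℂ) * c)
  have hC2 : C * C = 1 := by
    have := Complex.sin_sq_add_cos_sq ((Real.pi : ℂ) * c)
    rw [hsin0] at this
    simpa [C, sq] using this
  have hCne : C ≠ 0 := by
    intro h; rw [h, mul_zero] at hC2; exact one_ne_zero hC2.symm
  have hpi : (Real.pi : ℂ) ≠ 0 := by exact_mod_cast Real.pi_ne_zero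
  -- derivative of sin (π z) at c
  have hderiv : HasDerivAt (fun z : ℂ => Complex.sin ((Real.pi : ℂ) * z))
      ((Real.pi : ℂ) * C) c := by
    have h1 : HasDerivAt (fun z : ℂ => (Real.pi : ℂ) * z) (Real.pi : ℂ) c := by
      simpa using (hasDerivAt_id c).const_mul (Real.pi : ℂ)
    have h2 := (Complex.hasDerivAt_sin ((Real.pi : ℂ) * c)).comp c h1
    simpa [Function.comp_def, mul_comm (Complex.cos _)] using h2
  have hslope : Tendsto (fun z : ℂ => Complex.sin ((Real.pi : ℂ) * z) / (z - c)) (𝓝[≠] c)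
      (𝓝 ((Real.pi : ℂ) * C)) := by
    have := hasDerivAt_iff_tendsto_slope.mp hderiv
    refine this.congr' ?_
    filter_upwards [self_mem_nhdsWithin] with z hz
    simp [slope_def_field, hsin0, div_eq_mul_inv, mul_comm]
  have hinv : Tendsto (fun z : ℂ => (Complex.sin ((Real.pi : ℂ) * z) / (z - c))⁻¹) (𝓝[≠] c)
      (𝓝 (((Real.pi : ℂ) * C)⁻¹)) := hslope.inv₀ (mul_ne_zero hpi hCne)
  have hcos : Tendsto (fun z : ℂ => Complex.cos ((Real.pi : ℂ) * z)) (𝓝[≠] c) (𝓝 C) :=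
    ((Complex.continuous_cos.comp (continuous_const.mul continuous_id)).tendsto c).mono_left
      nhdsWithin_le_nhds
  have := hcos.mul hinv
  have heq : C * ((Real.pi : ℂ) * C)⁻¹ = (Real.pi : ℂ)⁻¹ := by
    rw [mul_inv, ← mul_assoc, mul_comm C, mul_assoc, mul_inv_cancel₀ hCne, mul_one]
  rw [heq] at this
  refine this.congr ?_
  intro z
  rw [Complex.cot_eq_cos_div_sin]
  field_simp [inv_div]

lemma myG_res (m n : ℕ) (x : ℝ) (hx : 0 < x) : ∀ c ∈ myS n,
    Tendsto (fun z => (z - c) * (myf m x z - ∑ k ∈ Finset.Icc 1 n, myr m x k * (z - (k:ℂ))⁻¹))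
      (𝓝[≠] c) (𝓝 0) := by
  intro c hc
  obtain ⟨k, hk1, hkn, hkc⟩ := (mem_myS n).mp hc
  subst hkc
  set c : ℂ := (k : ℂ)
  set L : ℂ := (Real.log x : ℂ)
  -- limit of (z-c) * f z
  have h1 : Tendsto (fun z => (z - c) * myf m x z) (𝓝[≠] c)
      (𝓝 ((Complex.exp ((c - 1) * L) * ((Complex.Gamma c)⁻¹)^m) * (Real.pi : ℂ)⁻¹)) := by
    have hcont : Tendsto (fun z : ℂ => Complex.exp ((z - 1) * L) * ((Complex.Gamma z)⁻¹)^m)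
        (𝓝[≠] c) (𝓝 (Complex.exp ((c - 1) * L) * ((Complex.Gamma c)⁻¹)^m)) := by
      have : Continuous fun z : ℂ => Complex.exp ((z - 1) * L) * ((Complex.Gamma z)⁻¹)^m := by
        exact (Complex.continuous_exp.comp ((continuous_id.sub continuous_const).mul
          continuous_const)).mul ((Complex.differentiable_one_div_Gamma.continuous).pow m)
      exact (this.tendsto c).mono_left nhdsWithin_le_nhds
    have := hcont.mul (tendsto_sub_mul_cot k)
    refine this.congr fun z => ?_
    rw [myf_eq, Complex.cot_eq_cos_div_sin, div_eq_mul_inv]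
    ring
  -- limit of the sum
  have h2 : Tendsto (fun z => ∑ j ∈ Finset.Icc 1 n, myr m x j * ((z - c) * (z - (j:ℂ))⁻¹))
      (𝓝[≠] c) (𝓝 (myr m x k)) := by
    have hksum : (∑ j ∈ Finset.Icc 1 n, if j = k then myr m x j else 0) = myr m x k := by
      rw [Finset.sum_ite_eq' (Finset.Icc 1 n) k (fun j => myr m x j)]
      simp [Finset.mem_Icc, hk1, hkn]
    rw [← hksum]
    refine tendsto_finset_sum _ fun j hj => ?_
    by_cases hjk : j = k
    · subst hjk
      simp only [if_pos rfl]
      have hev : (fun z : ℂ => myr m x j * ((z - c) * (z - (j:ℂ))⁻¹)) =ᶠ[𝓝[≠] c]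
          fun _ => myr m x j := by
        filter_upwards [self_mem_nhdsWithin] with z hz
        rw [mul_inv_cancel₀ (sub_ne_zero.2 hz), mul_one]
      exact Tendsto.congr' hev.symm tendsto_const_nhds
    · simp only [if_neg hjk]
      have hne : c - (j : ℂ) ≠ 0 := by
        rw [sub_ne_zero]
        intro h
        exact hjk (Nat.cast_injective h.symm)
      have : Tendsto (fun z : ℂ => myr m x j * ((z - c) * (z - (j:ℂ))⁻¹)) (𝓝 c)
          (𝓝 (myr m x j * ((c - c) * (c - (j:ℂ))⁻¹))) := by
        refine Tendsto.const_mul _ (Tendsto.mul ?_ ?_)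
        · exact (continuous_id.sub continuous_const).tendsto c
        · exact ((continuous_id.sub continuous_const).tendsto c).inv₀ hne
      simpa using this.mono_left nhdsWithin_le_nhds
  have h3 := h1.sub h2
  have hval : (Complex.exp ((c - 1) * L) * ((Complex.Gamma c)⁻¹)^m) * (Real.pi : ℂ)⁻¹
      - myr m x k = 0 := by
    rw [myr, div_eq_mul_inv, mul_inv, inv_pow]
    ring
  rw [hval] at h3
  refine h3.congr fun z => ?_
  rw [mul_sub, Finset.mul_sum]
  congr 1
  refine Finset.sum_congr rfl fun j hj => ?_
  ring

lemma sides_subset (n : ℕ) (hn : 1 ≤ n) : sides n ⊆ myU n \ (myS n : Set ℂ) := by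
  have hn' : (1:ℝ) ≤ n := by exact_mod_cast hn
  have huIcc : Set.uIcc (3/4 : ℝ) ((n:ℝ)+1/4) = Set.Icc (3/4 : ℝ) ((n:ℝ)+1/4) :=
    Set.uIcc_of_le (by linarith)
  have huIcc2 : Set.uIcc (-1 : ℝ) 1 = Set.Icc (-1 : ℝ) 1 := Set.uIcc_of_le (by norm_num)
  have hSim : ∀ z ∈ (myS n : Set ℂ), z.im = 0 ∧ ∃ k : ℕ, 1 ≤ k ∧ k ≤ n ∧ z.re = k := by
    intro z hz
    obtain ⟨k, h1, h2, h3⟩ := (mem_myS n).mp hz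
    refine ⟨by rw [← h3]; simp, k, h1, h2, by rw [← h3]; simp⟩
  rintro z (((⟨t, ht, rfl⟩ | ⟨t, ht, rfl⟩) | ⟨t, ht, rfl⟩) | ⟨t, ht, rfl⟩)
  · rw [huIcc] at ht
    refine ⟨?_, ?_⟩
    · simp only [myU, Set.mem_preimage, Set.mem_Ioo, Complex.sub_re, Complex.ofReal_re,
        Complex.I_re, sub_zero]
      exact ⟨by linarith [ht.1], by linarith [ht.2]⟩
    · intro h
      have := (hSim _ h).1
      simp at this
  · rw [huIcc] at ht
    refine ⟨?_, ?_⟩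
    · simp only [myU, Set.mem_preimage, Set.mem_Ioo, Complex.add_re, Complex.ofReal_re,
        Complex.I_re, add_zero]
      exact ⟨by linarith [ht.1], by linarith [ht.2]⟩
    · intro h
      have := (hSim _ h).1
      simp at this
  · refine ⟨?_, ?_⟩
    · simp only [myU, Set.mem_preimage, Set.mem_Ioo, Complex.add_re, Complex.ofReal_re,
        Complex.mul_re, Complex.I_re, Complex.I_im, Complex.ofReal_im]
      norm_num
      linarith
    · intro h
      obtain ⟨_, k, h1, h2, h3⟩ := hSim _ h
      simp only [Complex.add_re, Complex.ofReal_re, Complex.mul_re, Complex.I_re, Complex.I_im,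
        Complex.ofReal_im] at h3
      norm_num at h3
      have : (k:ℝ) ≤ n := by exact_mod_cast h2
      linarith
  · refine ⟨?_, ?_⟩
    · simp only [myU, Set.mem_preimage, Set.mem_Ioo, Complex.add_re, Complex.ofReal_re,
        Complex.mul_re, Complex.I_re, Complex.I_im, Complex.ofReal_im]
      norm_num
      linarith
    · intro h
      obtain ⟨_, k, h1, h2, h3⟩ := hSim _ h
      simp only [Complex.add_re, Complex.ofReal_re, Complex.mul_re, Complex.I_re, Complex.I_im,
        Complex.ofReal_im] at h3
      norm_num at h3
      have : (1:ℝ) ≤ k := by exact_mod_cast h1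
      linarith


/-- Residue computation: for `x > 0`,
`(1/(2πi)) ∮_{γ_n} x^{t−1} cot(πt)/Γ(t)^m dt = Σ_{k=0}^{n−1} x^k/(π (k!)^m)`,
where `x^{t−1} := exp((t−1) log x)` with the real logarithm. -/
theorem stmt9 (m n : ℕ) (hm : 1 ≤ m) (hn : 1 ≤ n) (x : ℝ) (hx : 0 < x) :
    (1 / (2 * (Real.pi : ℂ) * Complex.I)) *
      rectContour n (fun t =>
        Complex.exp ((t - 1) * (Real.log x : ℂ)) * Complex.cot (Real.pi * t) /
          Complex.Gamma t ^ m) =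
    ∑ k ∈ Finset.range n, (x : ℂ) ^ k / ((Real.pi : ℂ) * (Nat.factorial k : ℂ) ^ m) := by
  have hsub := sides_subset n hn
  obtain ⟨F, hFd, hFeq⟩ := removable_finset (myS n) (myU n) (myU_open n) _
    (myG_diff m n x) (myG_res m n x hx)
  have hintegrand : (fun t => Complex.exp ((t - 1) * (Real.log x : ℂ)) *
      Complex.cot (Real.pi * t) / Complex.Gamma t ^ m) = myf m x := rfl
  rw [hintegrand]
  -- rectContour of f equals that of F + principal parts
  set P : ℂ → ℂ := fun z => ∑ k ∈ Finset.Icc 1 n, myr m x k * (z - (k:ℂ))⁻¹ with hP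
  have hcongr : rectContour n (myf m x) = rectContour n (fun z => F z + P z) := by
    refine rectContour_congr n _ _ fun z hz => ?_
    have h := hFeq z (hsub hz)
    rw [hP]
    simp only at h ⊢
    rw [h]
    ring
  have hFcont : ContinuousOn F (myU n \ (myS n : Set ℂ)) :=
    hFd.continuousOn.mono diff_subset
  have hPcontj : ∀ j ∈ Finset.Icc 1 n,
      ContinuousOn (fun z => myr m x j * (z - (j:ℂ))⁻¹) (myU n \ (myS n : Set ℂ)) := by
    intro j hj
    refine continuousOn_const.mul (ContinuousOn.inv₀
      ((continuous_id.sub continuous_const).continuousOn) fun z hz => ?_)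
    rw [Finset.mem_Icc] at hj
    rw [sub_ne_zero]
    intro hzj
    exact hz.2 ((mem_myS n).mpr ⟨j, hj.1, hj.2, hzj.symm⟩)
  have hPcont : ContinuousOn P (myU n \ (myS n : Set ℂ)) :=
    continuousOn_finset_sum _ hPcontj
  have hadd : rectContour n (fun z => F z + P z) = rectContour n F + rectContour n P :=
    rectContour_add n F P _ hsub hFcont hPcont
  have hzero : rectContour n F = 0 := by
    refine rectContour_eq_zero n hn F (hFd.mono fun z hz => ?_)
    have hn' : (1:ℝ) ≤ n := by exact_mod_cast hn
    obtain ⟨h1, h2⟩ := hz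
    rw [Set.uIcc_of_le (by linarith : (3/4:ℝ) ≤ (n:ℝ)+1/4)] at h1
    simp only [Set.mem_preimage, Set.mem_Icc] at h1
    simp only [myU, Set.mem_preimage, Set.mem_Ioo]
    exact ⟨by linarith [h1.1], by linarith [h1.2]⟩
  have hsum : rectContour n P = ∑ j ∈ Finset.Icc 1 n,
      myr m x j * (2 * (Real.pi : ℂ) * Complex.I) := by
    rw [hP]
    rw [rectContour_sum n (Finset.Icc 1 n) (fun j z => myr m x j * (z - (j:ℂ))⁻¹) _ hsub hPcontj]
    refine Finset.sum_congr rfl fun j hj => ?_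
    rw [Finset.mem_Icc] at hj
    rw [rectContour_const_mul n (myr m x j) (fun z => (z - (j:ℂ))⁻¹), rect_inv n j hj.1 hj.2]
  rw [hcongr, hadd, hzero, hsum, zero_add]
  have hpi : (Real.pi : ℂ) ≠ 0 := by exact_mod_cast Real.pi_ne_zero
  have h2pii : (2 * (Real.pi : ℂ) * Complex.I) ≠ 0 :=
    mul_ne_zero (mul_ne_zero two_ne_zero hpi) Complex.I_ne_zero
  rw [← Finset.sum_mul]
  rw [show (1 / (2 * (Real.pi : ℂ) * Complex.I)) *
      ((∑ j ∈ Finset.Icc 1 n, myr m x j) * (2 * (Real.pi : ℂ) * Complex.I))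
      = ∑ j ∈ Finset.Icc 1 n, myr m x j by field_simp]
  -- reindex and identify terms
  rw [← Finset.Ico_add_one_right_eq_Icc, Finset.sum_Ico_eq_sum_range]
  norm_num
  refine Finset.sum_congr rfl fun i _ => ?_
  rw [myr]
  have e1 : (((1 + i : ℕ) : ℂ) - 1) = (i : ℂ) := by push_cast; ring
  have e2 : Complex.Gamma ((1 + i : ℕ) : ℂ) = (Nat.factorial i : ℂ) := by
    rw [show ((1 + i : ℕ) : ℂ) = (i : ℂ) + 1 by push_cast; ring,
      Complex.Gamma_nat_eq_factorial]
  rw [e1, e2, Complex.exp_nat_mul, ← Complex.ofReal_exp, Real.exp_log hx]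
end
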